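/- arXiv:2212.07727 — 3 statements merged into one kernel-verified Lean document; each statement's English description precedes it below -/
import Mathlib

section
/- Let E : [a, b] → ℝ be absolutely continuous, nonincreasing, and satisfy E'(t) ≤ -P·E(t)^{(k-2)/k} a.e. on the set where μ^{2k/(k+6)} ≤ E(t) ≤ 1, where k > 2 is an integer, P > 0, 0 < μ < 1, and 0 < E(a) ≤ ε² with ε ∈ (0,1). If t̄ denotes the supremum of s ∈ [a,b] such that μ^{2k/(k+6)} ≤ E(t) ≤ 1 for all t ∈ [a, s], then t̄ ≤ a + (k·ε^{4/k})/(2P). -/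
open MeasureTheory Set

set_option maxHeartbeats 1000000 in
theorem stmt1 (E E' : ℝ → ℝ) (a b P μ ε : ℝ) (k : ℕ)
    (hk : 2 < k) (hP : 0 < P) (hμ : 0 < μ) (hμ1 : μ < 1) (hε : 0 < ε) (hε1 : ε < 1)
    (hab : a < b)
    (hmono : AntitoneOn E (Icc a b))
    (hderiv : ∀ᵐ t ∂(volume.restrict (Icc a b)),
      HasDerivAt E (E' t) t ∧
      (μ ^ ((2*(k:ℝ))/((k:ℝ)+6)) ≤ E t ∧ E t ≤ 1 → E' t ≤ -P * E t ^ (((k:ℝ)-2)/(k:ℝ))))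
    (hAC : ∀ s ∈ Icc a b, E s - E a = ∫ t in a..s, E' t)
    (hEa : 0 < E a) (hEa2 : E a ≤ ε^2)
    (hamem : μ ^ ((2*(k:ℝ))/((k:ℝ)+6)) ≤ E a ∧ E a ≤ 1)
    (tbar : ℝ)
    (htbar : tbar = sSup {s | s ∈ Icc a b ∧
      ∀ t ∈ Icc a s, μ ^ ((2*(k:ℝ))/((k:ℝ)+6)) ≤ E t ∧ E t ≤ 1}) :
    tbar ≤ a + ((k:ℝ) * ε ^ ((4:ℝ)/(k:ℝ))) / (2*P) := by
  set m : ℝ := μ ^ ((2*(k:ℝ))/((k:ℝ)+6)) with hm_def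
  set p : ℝ := ((k:ℝ)-2)/(k:ℝ) with hp_def
  have hk3 : (3:ℝ) ≤ (k:ℝ) := by exact_mod_cast hk
  have hk0 : (0:ℝ) < (k:ℝ) := by linarith
  set q : ℝ := 2/(k:ℝ) with hq_def
  have hp : 0 < p := div_pos (by linarith) hk0
  have hq : 0 < q := div_pos (by norm_num) hk0
  have hq1 : q < 1 := by rw [hq_def, div_lt_one hk0]; linarith
  have hqp : q - 1 = -p := by rw [hq_def, hp_def]; field_simp; ring
  have hm : 0 < m := Real.rpow_pos_of_pos hμ _
  have key : ∀ s, s ∈ Icc a b → (∀ t ∈ Icc a s, m ≤ E t ∧ E t ≤ 1) →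
      s ≤ a + ((k:ℝ) * ε ^ ((4:ℝ)/(k:ℝ))) / (2*P) := by
    intro s hs H
    rcases eq_or_lt_of_le hs.1 with rfl | has
    · exact le_add_of_nonneg_right (by positivity)
    have hEs_pos : ∀ t ∈ Icc a s, 0 < E t := fun t ht => lt_of_lt_of_le hm (H t ht).1
    have hsub : Icc a s ⊆ Icc a b := Icc_subset_Icc le_rfl hs.2
    -- a.e. facts on [a,s]
    have hae : ∀ᵐ t ∂(volume.restrict (Icc a s)),
        HasDerivAt E (E' t) t ∧ E' t ≤ -P * E t ^ p := by
      have h1 := ae_restrict_of_ae_restrict_of_subset hsub hderiv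
      filter_upwards [h1, ae_restrict_mem measurableSet_Icc] with t h ht
      exact ⟨h.1, h.2 (H t ht)⟩
    -- integrability of E' on (a,s]
    have hne : volume.restrict (Ioo a s) ≠ 0 := by
      rw [Ne, Measure.restrict_eq_zero, Real.volume_Ioo, ENNReal.ofReal_eq_zero, not_le]
      linarith
    have hint : IntegrableOn E' (Ioc a s) := by
      by_contra hni
      have h0 : E s - E a = 0 := by
        rw [hAC s (hsub (right_mem_Icc.2 has.le)), intervalIntegral.integral_of_le has.le]
        exact integral_undef hni
      have hconst : ∀ t ∈ Icc a s, E t = E a := by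
        intro t ht
        have h1 : E t ≤ E a := hmono (hsub (left_mem_Icc.2 has.le)) (hsub ht) ht.1
        have h2 : E s ≤ E t := hmono (hsub ht) (hsub (right_mem_Icc.2 has.le)) ht.2
        linarith
      have hae2 : ∀ᵐ t ∂(volume.restrict (Ioo a s)),
          HasDerivAt E (E' t) t ∧ E' t ≤ -P * E t ^ p :=
        ae_restrict_of_ae_restrict_of_subset Ioo_subset_Icc_self hae
      have hfalse : ∀ᵐ t ∂(volume.restrict (Ioo a s)), False := by
        filter_upwards [hae2, ae_restrict_mem measurableSet_Ioo] with t h ht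
        have hEq : E =ᶠ[nhds t] fun _ => E a := by
          filter_upwards [Ioo_mem_nhds ht.1 ht.2] with y hy
          exact hconst y (Ioo_subset_Icc_self hy)
        have h0' : HasDerivAt E 0 t :=
          (hasDerivAt_const t (E a)).congr_of_eventuallyEq hEq
        have he0 : E' t = 0 := h.1.unique h0'
        have hneg : 0 < P * E t ^ p :=
          mul_pos hP (Real.rpow_pos_of_pos (hEs_pos t (Ioo_subset_Icc_self ht)) p)
        have := h.2
        rw [he0] at this
        linarith
      haveI : (ae (volume.restrict (Ioo a s))).NeBot := ae_neBot.2 hne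
      exact hfalse.exists.elim fun _ hf => hf
    have hii : ∀ u v, a ≤ u → u ≤ v → v ≤ s → IntervalIntegrable E' volume u v := by
      intro u v hu huv hv
      rw [intervalIntegrable_iff, uIoc_of_le huv]
      exact hint.mono_set (Ioc_subset_Ioc hu hv)
    have hftc : ∀ u v, a ≤ u → u ≤ v → v ≤ s → E v - E u = ∫ t in u..v, E' t := by
      intro u v hu huv hv
      have h1 := hAC u (hsub ⟨hu, huv.trans hv⟩)
      have h2 := hAC v (hsub ⟨hu.trans huv, hv⟩)
      have h3 := intervalIntegral.integral_add_adjacent_intervals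
        (hii a u le_rfl hu (huv.trans hv)) (hii u v hu huv hv)
      linarith
    -- key differential estimate
    have step : ∀ u v, a ≤ u → u ≤ v → v ≤ s → P * (v-u) * E v ^ p ≤ E u - E v := by
      intro u v hu huv hv
      have hvmem : v ∈ Icc a s := ⟨hu.trans huv, hv⟩
      have hEv : 0 < E v := hEs_pos v hvmem
      have hb : E' ≤ᵐ[volume.restrict (Icc u v)] fun _ => -(P * E v ^ p) := by
        have h1 := ae_restrict_of_ae_restrict_of_subset
          (Icc_subset_Icc hu hv : Icc u v ⊆ Icc a s) hae
        filter_upwards [h1, ae_restrict_mem measurableSet_Icc] with t h ht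
        have htmem : t ∈ Icc a s := ⟨hu.trans ht.1, ht.2.trans hv⟩
        have hEtv : E v ≤ E t := hmono (hsub htmem) (hsub hvmem) ht.2
        have h2 : E v ^ p ≤ E t ^ p := Real.rpow_le_rpow hEv.le hEtv hp.le
        show E' t ≤ -(P * E v ^ p)
        nlinarith [h.2]
      have hmono' := intervalIntegral.integral_mono_ae_restrict huv
        (hii u v hu huv hv)
        (intervalIntegrable_const : IntervalIntegrable (fun _ => -(P * E v ^ p)) volume u v) hb
      rw [intervalIntegral.integral_const] at hmono'
      rw [← hftc u v hu huv hv] at hmono'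
      simp only [smul_eq_mul] at hmono'
      nlinarith [hmono']
    -- MVT-based step
    have step2 : ∀ u v, a ≤ u → u < v → v ≤ s → ∀ c : ℝ, 0 < c → c * E u ^ p ≤ E v ^ p →
        c * (q * P) * (v - u) ≤ E u ^ q - E v ^ q := by
      intro u v hu huv hv c hc hcv
      have humem : u ∈ Icc a s := ⟨hu, huv.le.trans hv⟩
      have hvmem : v ∈ Icc a s := ⟨hu.trans huv.le, hv⟩
      have hEu : 0 < E u := hEs_pos u humem
      have hEv : 0 < E v := hEs_pos v hvmem
      have hstep := step u v hu huv.le hv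
      have hlt : E v < E u := by
        nlinarith [Real.rpow_pos_of_pos hEv p, mul_pos hP (sub_pos.2 huv)]
      obtain ⟨ξ, hξ, hslope⟩ := exists_hasDerivAt_eq_slope (fun x => x ^ q)
        (fun x => q * x ^ (q-1)) hlt
        (fun x hx => (Real.continuousAt_rpow_const x q
          (Or.inl (ne_of_gt (lt_of_lt_of_le hEv hx.1)))).continuousWithinAt)
        (fun x hx => Real.hasDerivAt_rpow_const (Or.inl (ne_of_gt (hEv.trans hx.1))))
      have hξ0 : 0 < ξ := hEv.trans hξ.1
      rw [eq_div_iff (by linarith : E u - E v ≠ 0)] at hslope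
      have h1 : E u ^ (q-1) ≤ ξ ^ (q-1) :=
        Real.rpow_le_rpow_of_nonpos hξ0 hξ.2.le (by linarith)
      have hD : E u ^ (q-1) * E u ^ p = 1 := by
        rw [← Real.rpow_add hEu, show q - 1 + p = 0 by rw [hqp]; ring, Real.rpow_zero]
      have hA : (0:ℝ) < E u ^ (q-1) := Real.rpow_pos_of_pos hEu _
      have key0 : c * (q * P) * (v - u) = (q * E u ^ (q-1)) * (P * (v-u) * (c * E u ^ p)) := by
        linear_combination (-(c * (q * P) * (v - u))) * hD
      rw [key0]
      have h2 : P * (v - u) * (c * E u ^ p) ≤ P * (v-u) * E v ^ p :=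
        mul_le_mul_of_nonneg_left hcv (by nlinarith)
      calc (q * E u ^ (q-1)) * (P * (v-u) * (c * E u ^ p))
          ≤ (q * E u ^ (q-1)) * (E u - E v) :=
            mul_le_mul_of_nonneg_left (h2.trans hstep) (by positivity)
        _ ≤ (q * ξ ^ (q-1)) * (E u - E v) :=
            mul_le_mul_of_nonneg_right (mul_le_mul_of_nonneg_left h1 hq.le) (by linarith)
        _ = E u ^ q - E v ^ q := hslope
    -- continuity of E on [a,s]
    have hIcc_int : IntegrableOn E' (Icc a s) := (integrableOn_Icc_iff_integrableOn_Ioc).2 hint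
    have hEcont : ContinuousOn E (Icc a s) := by
      have hprim : ContinuousOn (fun x => E a + ∫ t in a..x, E' t) (Icc a s) := by
        refine continuousOn_const.add ?_
        have := intervalIntegral.continuousOn_primitive_interval
          (μ := volume) (f := E') (a := a) (b := s) (by rwa [uIcc_of_le has.le])
        rwa [uIcc_of_le has.le] at this
      refine hprim.congr fun x hx => ?_
      have := hAC x (hsub hx)
      beta_reduce
      rw [← hftc a x le_rfl hx.1 hx.2]
      ring
    -- continuous induction, for each c < 1
    have main : ∀ c : ℝ, 0 < c → c < 1 → c * (q*P) * (s - a) ≤ ε ^ ((4:ℝ)/(k:ℝ)) := by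
      intro c hc hc1
      set A := {u | u ∈ Icc a s ∧ c * (q*P) * (u - a) ≤ E a ^ q - E u ^ q} with hA_def
      have haA : a ∈ A := ⟨left_mem_Icc.2 has.le, by simp⟩
      have hAbdd : BddAbove A := ⟨s, fun x hx => hx.1.2⟩
      have hclosed : IsClosed A := by
        have hg : ContinuousOn (fun u => E a ^ q - E u ^ q - c*(q*P)*(u-a)) (Icc a s) := by
          refine ContinuousOn.sub (ContinuousOn.sub continuousOn_const ?_) ?_
          · exact hEcont.rpow_const fun x hx => Or.inl (ne_of_gt (hEs_pos x hx))
          · exact (Continuous.continuousOn (by continuity))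
        have hAeq : A = Icc a s ∩ (fun u => E a ^ q - E u ^ q - c*(q*P)*(u-a)) ⁻¹' (Ici 0) := by
          ext u
          simp only [hA_def, mem_setOf_eq, mem_inter_iff, mem_preimage, mem_Ici, sub_nonneg]
        rw [hAeq]
        exact hg.preimage_isClosed_of_isClosed isClosed_Icc isClosed_Ici
      have hwA : sSup A ∈ A := hclosed.csSup_mem ⟨a, haA⟩ hAbdd
      set w := sSup A with hw_def
      have hws : w ≤ s := hwA.1.2
      have haw : a ≤ w := hwA.1.1
      rcases eq_or_lt_of_le hws with hws' | hws'
      · -- w = s : conclude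
        have h2 := hwA.2
        rw [hws'] at h2
        have h1 : E a ^ q ≤ (ε^2 : ℝ) ^ q := Real.rpow_le_rpow hEa.le hEa2 hq.le
        have h2' : ((ε^2 : ℝ)) ^ q = ε ^ ((4:ℝ)/(k:ℝ)) := by
          rw [← Real.rpow_natCast ε 2, ← Real.rpow_mul hε.le]
          congr 1
          rw [hq_def]
          push_cast
          ring
        have h3 : 0 ≤ E s ^ q := Real.rpow_nonneg (hEs_pos s (right_mem_Icc.2 has.le)).le _
        linarith
      · exfalso
        have hEw : 0 < E w := hEs_pos w hwA.1
        have hcp : (0:ℝ) < c ^ p⁻¹ := Real.rpow_pos_of_pos hc _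
        have hc' : c ^ p⁻¹ < 1 := Real.rpow_lt_one hc.le hc1 (by positivity)
        have hlt : c ^ p⁻¹ * E w < E w := by nlinarith
        have htd : Filter.Tendsto E (nhdsWithin w (Ioi w)) (nhds (E w)) := by
          refine Filter.Tendsto.mono_left (hEcont w hwA.1) (nhdsWithin_le_iff.2 ?_)
          exact Filter.mem_of_superset (Ioc_mem_nhdsGT_of_mem ⟨le_rfl, hws'⟩)
            fun x hx => ⟨haw.trans hx.1.le, hx.2⟩
        have hev1 : ∀ᶠ v in nhdsWithin w (Ioi w), c ^ p⁻¹ * E w < E v :=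
          htd.eventually (eventually_gt_nhds hlt)
        have hev2 : ∀ᶠ v in nhdsWithin w (Ioi w), v ∈ Ioc w s :=
          Ioc_mem_nhdsGT_of_mem ⟨le_rfl, hws'⟩
        obtain ⟨v, hv1, hv2⟩ := (hev1.and hev2).exists
        have hvA : v ∈ A := by
          refine ⟨⟨haw.trans hv2.1.le, hv2.2⟩, ?_⟩
          have hr : c * E w ^ p ≤ E v ^ p := by
            have h1 : (c ^ p⁻¹ * E w) ^ p ≤ E v ^ p :=
              Real.rpow_le_rpow (by positivity) hv1.le hp.le
            rwa [Real.mul_rpow hcp.le hEw.le, ← Real.rpow_mul hc.le,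
              inv_mul_cancel₀ (ne_of_gt hp), Real.rpow_one] at h1
          have h2 := step2 w v haw hv2.1 hv2.2 c hc hr
          have h3 := hwA.2
          nlinarith
        exact absurd (le_csSup hAbdd hvA) (not_le.2 hv2.1)
    -- let c → 1
    have hfin : (q*P) * (s-a) ≤ ε ^ ((4:ℝ)/(k:ℝ)) := by
      by_contra hcon
      push_neg at hcon
      set r := ε ^ ((4:ℝ)/(k:ℝ)) with hr_def
      have hr0 : 0 < r := Real.rpow_pos_of_pos hε _
      have hB : 0 < (q*P) * (s-a) := mul_pos (mul_pos hq hP) (by linarith)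
      set c := (r / ((q*P)*(s-a)) + 1)/2 with hc_def
      have hrB : r / ((q*P)*(s-a)) < 1 := (div_lt_one hB).2 hcon
      have hc0 : 0 < c := by
        have : 0 < r / ((q*P)*(s-a)) := div_pos hr0 hB
        rw [hc_def]; linarith
      have hc1 : c < 1 := by rw [hc_def]; linarith
      have h5 : r / ((q*P)*(s-a)) < c := by rw [hc_def]; linarith
      have h6 : r < c * ((q*P)*(s-a)) := (div_lt_iff₀ hB).1 h5
      have := main c hc0 hc1
      nlinarith
    have h2P : (0:ℝ) < 2*P := by linarith
    have hfin2 : 2*P*(s-a) ≤ (k:ℝ) * ε ^ ((4:ℝ)/(k:ℝ)) := by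
      have h7 := mul_le_mul_of_nonneg_left hfin hk0.le
      calc 2*P*(s-a) = (k:ℝ) * ((q*P)*(s-a)) := by
            rw [hq_def]; field_simp
        _ ≤ (k:ℝ) * ε ^ ((4:ℝ)/(k:ℝ)) := h7
    have := (le_div_iff₀ h2P).2 (by linarith : (s-a) * (2*P) ≤ (k:ℝ) * ε ^ ((4:ℝ)/(k:ℝ)))
    linarith
  rw [htbar]
  refine csSup_le ⟨a, left_mem_Icc.2 hab.le, ?_⟩ ?_
  · intro t ht
    have : t = a := le_antisymm ht.2 ht.1
    rw [this]; exact hamem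
  · rintro x ⟨hx1, hx2⟩
    exact key x hx1 hx2
end

section
/- For each integer j ≥ 1 set σ_j := ∑_{i=1}^j 1/i. Then for every j ≥ 3, the number α_j > 1 defined by 1/α_j = 1 - 1/(4σ_j) satisfies the inequality √(σ_j + 1/(j+1)) - √(σ_j/α_j) ≤ √(1 - 1/α_j). -/
theorem stmt2 (σ : ℕ → ℝ) (hσ : ∀ j, σ j = ∑ i ∈ Finset.range j, (1:ℝ)/(i+1))
    (j : ℕ) (hj : 3 ≤ j) (α : ℝ) (hα : 1 < α) (hαdef : 1/α = 1 - 1/(4 * σ j)) :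
    Real.sqrt (σ j + 1/((j:ℝ)+1)) - Real.sqrt (σ j / α) ≤ Real.sqrt (1 - 1/α) := by
  have hs : (1:ℝ) ≤ σ j := by
    rw [hσ]
    calc (1:ℝ) = 1/((0:ℕ)+1) := by norm_num
      _ ≤ ∑ i ∈ Finset.range j, (1:ℝ)/(i+1) :=
        Finset.single_le_sum (f := fun i : ℕ => (1:ℝ)/(i+1))
          (fun i _ => by positivity) (Finset.mem_range.mpr (by omega))
  set s := σ j with hsdef
  have hs0 : (0:ℝ) < s := by linarith
  have hα0 : α ≠ 0 := by positivity
  have h1 : 1 - 1/α = 1/(4*s) := by linarith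
  have h2 : s / α = s - 1/4 := by
    have hsa : s / α = s * (1/α) := by ring
    rw [hsa, hαdef]
    field_simp
  rw [h2, h1]
  set b := Real.sqrt (s - 1/4) with hbdef
  set c := Real.sqrt (1/(4*s)) with hcdef
  have hb : 0 ≤ b := Real.sqrt_nonneg _
  have hc : 0 ≤ c := Real.sqrt_nonneg _
  have hb2 : b^2 = s - 1/4 := Real.sq_sqrt (by linarith)
  have hc2 : c^2 = 1/(4*s) := Real.sq_sqrt (by positivity)
  have hu1 : 1/(4*s) ≤ 1/4 := by
    rw [div_le_div_iff₀ (by linarith) (by norm_num)] <;> linarith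
  have h4 : (2*(b*c))^2 = 1 - 1/(4*s) := by
    have he : (2*(b*c))^2 = 4*(b^2*c^2) := by ring
    rw [he, hb2, hc2]
    field_simp
  have hbc : 1 - 1/(4*s) ≤ 2*(b*c) := by
    nlinarith [mul_nonneg hb hc]
  have hj1 : 1/((j:ℝ)+1) ≤ 1/4 := by
    have h3j : (3:ℝ) ≤ j := by exact_mod_cast hj
    rw [div_le_div_iff₀ (by linarith) (by norm_num)]
    linarith
  have key : s + 1/((j:ℝ)+1) ≤ (b+c)^2 := by nlinarith
  have hfin : Real.sqrt (s + 1/((j:ℝ)+1)) ≤ b + c :=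
    calc Real.sqrt (s + 1/((j:ℝ)+1)) ≤ Real.sqrt ((b+c)^2) := Real.sqrt_le_sqrt key
      _ = b + c := Real.sqrt_sq (by linarith)
  linarith
end

section
/- Fix α > 1 and an integer j ≥ 1, set σ_j := ∑_{i=1}^j 1/i. Let (x,t) ∈ ℝ^k × (-∞, 0) satisfy σ_j|t| ≤ |x|² < σ_{j+1}|t|, and define t₀ := t/α and x₀ := √(σ_j|t|/α)·x/|x|. Then (x₀, t₀) satisfies |x₀|² = σ_j|t₀| (so (x₀,t₀) lies on the boundary of the parabolic region {|x|² < σ_j|t|}), and moreover |x - x₀| < √|t|·(√σ_{j+1} - √(σ_j/α)) and √|t - t₀| = √|t|·√(1 - 1/α). Consequently, if √(σ_j + 1/(j+1)) - √(σ_j/α) ≤ √(1 - 1/α), then |x - x₀|² < |t - t₀|. -/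
theorem stmt6 (k : ℕ) (hk : 1 ≤ k) (σ : ℕ → ℝ)
    (hσ : ∀ j, σ j = ∑ i ∈ Finset.range j, (1:ℝ)/(i+1))
    (α : ℝ) (hα : 1 < α) (j : ℕ) (hj : 1 ≤ j)
    (x : EuclideanSpace ℝ (Fin k)) (t : ℝ) (ht : t < 0)
    (hlow : σ j * |t| ≤ ‖x‖^2) (hhigh : ‖x‖^2 < σ (j+1) * |t|)
    (t₀ : ℝ) (ht₀ : t₀ = t / α)
    (x₀ : EuclideanSpace ℝ (Fin k))
    (hx₀ : x₀ = (Real.sqrt (σ j * |t| / α) / ‖x‖) • x) :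
    ‖x₀‖^2 = σ j * |t₀| ∧
    ‖x - x₀‖ < Real.sqrt |t| * (Real.sqrt (σ (j+1)) - Real.sqrt (σ j / α)) ∧
    Real.sqrt |t - t₀| = Real.sqrt |t| * Real.sqrt (1 - 1/α) ∧
    (Real.sqrt (σ j + 1/((j:ℝ)+1)) - Real.sqrt (σ j / α) ≤ Real.sqrt (1 - 1/α) →
      ‖x - x₀‖^2 < |t - t₀|) := by
  have htpos : (0:ℝ) < |t| := abs_pos.mpr (ne_of_lt ht)
  have hαpos : (0:ℝ) < α := lt_trans one_pos hα
  have hσjpos : 0 < σ j := by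
    rw [hσ]
    apply Finset.sum_pos
    · intro i _; positivity
    · exact Finset.nonempty_range_iff.mpr (by omega)
  have hx2pos : 0 < ‖x‖^2 := lt_of_lt_of_le (by positivity) hlow
  have hxpos : 0 < ‖x‖ := by nlinarith [norm_nonneg x]
  have hc : 0 ≤ Real.sqrt (σ j * |t| / α) / ‖x‖ := by positivity
  have hnx0 : ‖x₀‖ = Real.sqrt (σ j * |t| / α) := by
    rw [hx₀, norm_smul, Real.norm_eq_abs, abs_of_nonneg hc,
      div_mul_cancel₀ _ (ne_of_gt hxpos)]
  have h1 : ‖x₀‖^2 = σ j * |t₀| := by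
    rw [hnx0, Real.sq_sqrt (by positivity), ht₀, abs_div, abs_of_pos hαpos,
      mul_div_assoc]
  have hle : Real.sqrt (σ j * |t| / α) ≤ ‖x‖ := by
    rw [show ‖x‖ = Real.sqrt (‖x‖^2) from (Real.sqrt_sq (le_of_lt hxpos)).symm]
    apply Real.sqrt_le_sqrt
    calc σ j * |t| / α ≤ σ j * |t| := by
          apply div_le_self (by positivity) (le_of_lt hα)
      _ ≤ ‖x‖^2 := hlow
  have hxx0 : ‖x - x₀‖ = ‖x‖ - Real.sqrt (σ j * |t| / α) := by
    have hx' : x - x₀ = (1 - Real.sqrt (σ j * |t| / α) / ‖x‖) • x := by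
      rw [hx₀, sub_smul, one_smul]
    rw [hx', norm_smul, Real.norm_eq_abs, abs_of_nonneg, sub_mul, one_mul,
        div_mul_cancel₀ _ (ne_of_gt hxpos)]
    rw [sub_nonneg]
    exact div_le_one_of_le₀ hle (norm_nonneg x)
  have hxlt : ‖x‖ < Real.sqrt (σ (j+1) * |t|) :=
    (Real.lt_sqrt (norm_nonneg x)).mpr hhigh
  have e1 : Real.sqrt (σ j * |t| / α) = Real.sqrt |t| * Real.sqrt (σ j / α) := by
    rw [show σ j * |t| / α = |t| * (σ j / α) by ring,
      Real.sqrt_mul (le_of_lt htpos)]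
  have e2 : Real.sqrt (σ (j+1) * |t|) = Real.sqrt |t| * Real.sqrt (σ (j+1)) := by
    rw [mul_comm, Real.sqrt_mul (le_of_lt htpos)]
  rw [e2] at hxlt
  have h2 : ‖x - x₀‖ < Real.sqrt |t| * (Real.sqrt (σ (j+1)) - Real.sqrt (σ j / α)) := by
    rw [hxx0, e1, mul_sub]
    linarith
  have h1α : 0 < 1 - 1/α := by
    have : 1/α < 1 := by rw [div_lt_one hαpos]; exact hα
    linarith
  have habs : |t - t₀| = |t| * (1 - 1/α) := by
    rw [ht₀, abs_of_neg ht, abs_of_neg]; · ring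
    rw [show t - t/α = t * (1 - 1/α) by ring]
    exact mul_neg_of_neg_of_pos ht h1α
  have h3 : Real.sqrt |t - t₀| = Real.sqrt |t| * Real.sqrt (1 - 1/α) := by
    rw [habs, Real.sqrt_mul (abs_nonneg t)]
  refine ⟨h1, h2, h3, fun hcond => ?_⟩
  have hsum : σ (j+1) = σ j + 1/((j:ℝ)+1) := by
    rw [hσ, hσ, Finset.sum_range_succ]
  have hcond' : Real.sqrt (σ (j+1)) - Real.sqrt (σ j / α) ≤ Real.sqrt (1 - 1/α) := by
    rw [hsum]; exact hcond
  have hlt : ‖x - x₀‖ < Real.sqrt |t| * Real.sqrt (1 - 1/α) :=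
    lt_of_lt_of_le h2 (mul_le_mul_of_nonneg_left hcond' (Real.sqrt_nonneg _))
  have hsq : ‖x - x₀‖^2 < (Real.sqrt |t| * Real.sqrt (1 - 1/α))^2 :=
    pow_lt_pow_left₀ hlt (norm_nonneg _) two_ne_zero
  calc ‖x - x₀‖^2 < (Real.sqrt |t| * Real.sqrt (1 - 1/α))^2 := hsq
    _ = |t| * (1 - 1/α) := by
        rw [mul_pow, Real.sq_sqrt (le_of_lt htpos), Real.sq_sqrt (le_of_lt h1α)]
    _ = |t - t₀| := habs.symm
end
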